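/- Let (X, ≼, △) be a partially ordered semigroup (△ commutative, associative, and monotone in each argument with respect to the partial order ≼). Define S₁ ⋆ S₂ = {x₁ △ x₂ | x₁ ∈ S₁, x₂ ∈ S₂} for S₁, S₂ ⊆ X, and let m(S) denote the set of minimal elements of S. Then for all finite subsets S₁, S₂ of X, m(S₁ ⋆ S₂) = m(S₁ ⋆ m(S₂)). -/

import Mathlib

/-- In a partially ordered semigroup, with
`S₁ ⋆ S₂ = {x₁ △ x₂ | x₁ ∈ S₁, x₂ ∈ S₂}` and `m` the minimal-elements
operator, for finite subsets: `m (S₁ ⋆ S₂) = m (S₁ ⋆ m S₂)`. -/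
theorem min_elements_star {X : Type*} [PartialOrder X] (op : X → X → X)
    (hcomm : ∀ x y, op x y = op y x)
    (hassoc : ∀ x y z, op (op x y) z = op x (op y z))
    (hmono : ∀ x y z, x ≤ y → op x z ≤ op y z)
    (m : Set X → Set X)
    (hm : ∀ S : Set X, m S = {x | x ∈ S ∧ ∀ x' ∈ S, ¬ x' < x})
    (S₁ S₂ : Set X) (h₁ : S₁.Finite) (h₂ : S₂.Finite) :
    m (Set.image2 op S₁ S₂) = m (Set.image2 op S₁ (m S₂)) := by
  have hmS₂ : m S₂ ⊆ S₂ := by rw [hm]; exact fun x hx => hx.1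
  have hsub : Set.image2 op S₁ (m S₂) ⊆ Set.image2 op S₁ S₂ :=
    Set.image2_subset_left hmS₂
  have hmin : ∀ b ∈ S₂, ∃ b' ∈ m S₂, b' ≤ b := by
    intro b hb
    obtain ⟨b', hle, hbmin⟩ := h₂.isPWO.exists_le_minimal hb
    refine ⟨b', ?_, hle⟩
    rw [hm]
    exact ⟨hbmin.1, fun c hc hlt => absurd (hbmin.2 hc hlt.le) (not_le_of_gt hlt)⟩
  ext x
  simp only [hm (Set.image2 op S₁ S₂), hm (Set.image2 op S₁ (m S₂)), Set.mem_setOf_eq]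
  constructor
  · rintro ⟨hx, hxmin⟩
    refine ⟨?_, fun x' hx' => hxmin x' (hsub hx')⟩
    obtain ⟨a, ha, b, hb, rfl⟩ := hx
    obtain ⟨b', hb', hble⟩ := hmin b hb
    have hle : op a b' ≤ op a b := by
      rw [hcomm a b', hcomm a b]; exact hmono _ _ _ hble
    have hmem : op a b' ∈ Set.image2 op S₁ S₂ := ⟨a, ha, b', hmS₂ hb', rfl⟩
    have := hxmin _ hmem
    have heq : op a b' = op a b := le_antisymm hle (by
      by_contra h
      exact this (lt_of_le_of_ne hle (fun he => h (he ▸ le_refl _))))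
    exact heq ▸ ⟨a, ha, b', hb', rfl⟩
  · rintro ⟨hx, hxmin⟩
    refine ⟨hsub hx, ?_⟩
    rintro x' ⟨c, hc, d, hd, rfl⟩ hlt
    obtain ⟨d', hd', hdle⟩ := hmin d hd
    have hle : op c d' ≤ op c d := by
      rw [hcomm c d', hcomm c d]; exact hmono _ _ _ hdle
    exact hxmin (op c d') ⟨c, hc, d', hd', rfl⟩ (lt_of_le_of_lt hle hlt)
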